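/- Let Φ = (V, 𝒬, 𝒞) be a CSP formula and p ∈ (0,1) a real with e·p·(Δ+1) < 1 and ℙ[¬c] ≤ p for every c ∈ 𝒞. Then Φ has a satisfying assignment, and for every variable v ∈ V and every value a ∈ Q_v, 1/q_v − ((1 − e·p)^{−(Δ+1)} − 1) ≤ Pr_{X∼μ}[X(v) = a] ≤ 1/q_v + ((1 − e·p)^{−(Δ+1)} − 1). -/

import Mathlib

open Finset

inductive PVal (α : Type) : Type where
  | val (a : α)
  | star
  | unacc

structure CSP (V : Type) [Fintype V] [DecidableEq V] where
  Q : V → Type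
  fintypeQ : ∀ v, Fintype (Q v)
  decEqQ : ∀ v, DecidableEq (Q v)
  card_two : ∀ v, 2 ≤ Fintype.card (Q v)
  C : Type
  fintypeC : Fintype C
  decEqC : DecidableEq C
  vbl : C → Finset V
  sat : C → ((v : V) → Q v) → Prop
  sat_local : ∀ c x y, (∀ v ∈ vbl c, x v = y v) → sat c x → sat c y

attribute [instance] CSP.fintypeQ CSP.decEqQ CSP.fintypeC CSP.decEqC

namespace CSP

variable {V : Type} [Fintype V] [DecidableEq V] (Φ : CSP V)

/-- The space of (full) assignments `𝒬 = ∏_v Q_v`. -/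
abbrev Assign := (v : V) → Φ.Q v

/-- Partial assignments `𝒬* = ∏_v (Q_v ∪ {⋆, ☆})`. -/
abbrev PAssign := (v : V) → PVal (Φ.Q v)

/-- A full assignment agrees with a partial assignment on all assigned variables. -/
def agrees (σ : Φ.PAssign) (x : Φ.Assign) : Prop :=
  ∀ (v : V) (a : Φ.Q v), σ v = PVal.val a → x v = a

/-- `v ∈ Λ(σ)` : the variable `v` is assigned a value from its domain in `σ`. -/
def assigned (σ : Φ.PAssign) (v : V) : Prop := ∃ a, σ v = PVal.val a

/-- The set of satisfying assignments. -/
def Sat : Set Φ.Assign := {x | ∀ c, Φ.sat c x}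

/-- The event `¬ c` that constraint `c` is violated. -/
def viol (c : Φ.C) : Set Φ.Assign := {x | ¬ Φ.sat c x}

/-- `ℙ[A]` : probability of the event `A` under the uniform product distribution. -/
noncomputable def prob (A : Set Φ.Assign) : ℝ :=
  (A.ncard : ℝ) / (Fintype.card Φ.Assign : ℝ)

/-- `ℙ[A | σ]` : probability of `A` under the uniform product distribution conditioned
on agreeing with `σ` on all assigned variables. -/
noncomputable def condProb (A : Set Φ.Assign) (σ : Φ.PAssign) : ℝ :=
  ((A ∩ {x | Φ.agrees σ x}).ncard : ℝ) / (({x : Φ.Assign | Φ.agrees σ x}).ncard : ℝ)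

/-- `Pr_μ[A]` : probability of `A` under the uniform distribution over satisfying assignments. -/
noncomputable def muProb (A : Set Φ.Assign) : ℝ :=
  ((A ∩ Φ.Sat).ncard : ℝ) / ((Φ.Sat.ncard : ℝ))

/-- the domain size `q`. -/
noncomputable def qmax : ℕ := Finset.univ.sup fun v : V => Fintype.card (Φ.Q v)

/-- the width `k`. -/
noncomputable def width : ℕ := Finset.univ.sup fun c : Φ.C => (Φ.vbl c).card

/-- the dependency degree `Δ`. -/
noncomputable def degree : ℕ :=
  Finset.univ.sup fun c : Φ.C =>
    (Finset.univ.filter fun c' : Φ.C => c' ≠ c ∧ ((Φ.vbl c) ∩ (Φ.vbl c')).Nonempty).card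

end CSP


-- ===== auxiliary lemmas =====

lemma arith_upper {Na Sc qv t : ℝ} (hqv : 2 ≤ qv) (ht : 1 ≤ t) (hSc : 0 ≤ Sc)
    (h : Na * qv ≤ t * Sc) : Na ≤ (1/qv + (t - 1)) * Sc := by
  have hqv0 : 0 < qv := by linarith
  have hdiv : (1/qv) * qv = 1 := by field_simp
  nlinarith [mul_nonneg (mul_nonneg (sub_nonneg.mpr ht) hSc) (by linarith : (0:ℝ) ≤ qv - 1)]

lemma arith_lower {Na Sc qv t : ℝ} (hqv : 2 ≤ qv) (ht : 1 ≤ t) (hSc : 0 ≤ Sc)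
    (h : (Sc - Na) * qv ≤ (qv - 1) * (t * Sc)) : (1/qv - (t - 1)) * Sc ≤ Na := by
  have hqv0 : 0 < qv := by linarith
  have hdiv : (1/qv) * qv = 1 := by field_simp
  nlinarith [mul_nonneg (sub_nonneg.mpr ht) hSc]

lemma lll_numeric {p : ℝ} {D : ℕ} (hp : 0 < p) (h : Real.exp 1 * p * (D + 1) ≤ 1) :
    p ≤ (Real.exp 1 * p) * (1 - Real.exp 1 * p) ^ D := by
  set x := Real.exp 1 * p with hx
  have hx0 : 0 < x := mul_pos (Real.exp_pos 1) hp
  have key : Real.exp (-1) ≤ (1 - x) ^ D := by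
    rcases Nat.eq_zero_or_pos D with hD | hD
    · rw [hD, pow_zero]
      exact Real.exp_le_one_iff.mpr (by norm_num)
    · have hD1 : (1 : ℝ) ≤ D := Nat.one_le_cast.mpr hD
      have hxlt : x < 1 := by nlinarith [hx0]
      have h1x : 0 < 1 - x := by linarith
      have step : Real.exp (-(x / (1 - x))) ≤ 1 - x := by
        have h2 : 1 / (1 - x) ≤ Real.exp (x / (1 - x)) := by
          have := Real.add_one_le_exp (x / (1 - x))
          have heq : x / (1 - x) + 1 = 1 / (1 - x) := by field_simp; ring
          linarith
        rw [Real.exp_neg]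
        calc (Real.exp (x / (1 - x)))⁻¹ ≤ (1 / (1 - x))⁻¹ := by
              apply inv_anti₀
              · positivity
              · exact h2
          _ = 1 - x := by field_simp
      calc Real.exp (-1) ≤ Real.exp (-(x / (1 - x)) * D) := by
            apply Real.exp_le_exp.mpr
            rw [neg_mul, neg_le_neg_iff]
            rw [div_mul_eq_mul_div, div_le_one h1x]
            nlinarith
        _ = (Real.exp (-(x / (1 - x)))) ^ D := by
            rw [← Real.exp_nat_mul]; ring_nf
        _ ≤ (1 - x) ^ D := by
            apply pow_le_pow_left₀ (Real.exp_pos _).le step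
  calc p = x * Real.exp (-1) := by
        rw [hx, Real.exp_neg]
        field_simp
    _ ≤ x * (1 - x) ^ D := mul_le_mul_of_nonneg_left key hx0.le

section FiberLemmas
variable {V : Type} [Fintype V] [DecidableEq V] {Q : V → Type} [∀ v, Fintype (Q v)]
  [∀ v, DecidableEq (Q v)]

lemma fiber_partition (v : V) (T : Set ((w : V) → Q w)) :
    T.ncard = ∑ b : Q v, ({x : (w : V) → Q w | x v = b} ∩ T).ncard := by
  classical
  rw [Set.ncard_eq_toFinset_card' T]
  rw [Finset.card_eq_sum_card_fiberwise (f := fun x => x v) (t := Finset.univ)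
    (fun x _ => Finset.mem_univ _)]
  apply Finset.sum_congr rfl
  intro b _
  rw [Set.ncard_eq_toFinset_card']
  congr 1
  ext x
  simp [Set.mem_toFinset]
  tauto

lemma fiber_card (v : V) (a : Q v) :
    ({x : (w : V) → Q w | x v = a}).ncard * Fintype.card (Q v)
      = Fintype.card ((w : V) → Q w) := by
  classical
  have hval : ∀ b : Q v, ({x : (w : V) → Q w | x v = b}).ncard
      = ({x : (w : V) → Q w | x v = a}).ncard := by
    intro b
    have himg : (fun x => Function.update x v b) '' {x : (w : V) → Q w | x v = a}
        = {x : (w : V) → Q w | x v = b} := by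
      ext y
      constructor
      · rintro ⟨x, hx, rfl⟩
        simp [Function.update_self]
      · intro hy
        refine ⟨Function.update y v a, by simp [Function.update_self], ?_⟩
        ext w
        by_cases hw : w = v
        · subst hw; simp [Function.update_self]; exact hy.symm
        · simp [Function.update_of_ne hw]
    have hinj : Set.InjOn (fun x => Function.update x v b)
        {x : (w : V) → Q w | x v = a} := by
      intro x hx y hy hxy
      ext w
      by_cases hw : w = v
      · subst hw; rw [hx, hy]
      · have := congrFun hxy w
        simpa [Function.update_of_ne hw] using this
    rw [← himg, Set.ncard_image_of_injOn hinj]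
  have hpart := fiber_partition v (Set.univ : Set ((w : V) → Q w))
  rw [Set.ncard_univ, Nat.card_eq_fintype_card] at hpart
  simp only [Set.inter_univ] at hpart
  rw [hpart, Finset.sum_congr rfl (fun b _ => hval b), Finset.sum_const,
    Finset.card_univ, smul_eq_mul, mul_comm]

end FiberLemmas

namespace CSP
variable {V : Type} [Fintype V] [DecidableEq V] {Φ : CSP V}

def satAll (Φ : CSP V) (S : Finset Φ.C) : Set Φ.Assign := {x | ∀ c ∈ S, Φ.sat c x}

lemma nonemptyQ (v : V) : Nonempty (Φ.Q v) := by
  have := Φ.card_two v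
  have : 0 < Fintype.card (Φ.Q v) := by omega
  exact Fintype.card_pos_iff.mp this

instance : Nonempty Φ.Assign := ⟨fun v => (nonemptyQ v).some⟩

lemma total_pos : 0 < Fintype.card Φ.Assign := Fintype.card_pos

lemma satAll_anti {R S : Finset Φ.C} (h : R ⊆ S) : Φ.satAll S ⊆ Φ.satAll R :=
  fun x hx c hc => hx c (h hc)

lemma satAll_split (S : Finset Φ.C) (c : Φ.C) (hc : c ∉ S) :
    (Φ.satAll S).ncard = (Φ.satAll (insert c S)).ncard + (Φ.viol c ∩ Φ.satAll S).ncard := by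
  have hU : Φ.satAll S = Φ.satAll (insert c S) ∪ (Φ.viol c ∩ Φ.satAll S) := by
    ext x
    simp only [satAll, viol, Set.mem_setOf_eq, Set.mem_union, Set.mem_inter_iff,
      Finset.mem_insert]
    constructor
    · intro h
      by_cases hs : Φ.sat c x
      · exact Or.inl (fun c' hc' => hc'.elim (fun e => e ▸ hs) (h c'))
      · exact Or.inr ⟨hs, h⟩
    · rintro (h | ⟨_, h⟩) c' hc'
      · exact h c' (Or.inr hc')
      · exact h c' hc'
  have hdisj : Disjoint (Φ.satAll (insert c S)) (Φ.viol c ∩ Φ.satAll S) := by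
    rw [Set.disjoint_left]
    rintro x hx ⟨hv, _⟩
    exact hv (hx c (Finset.mem_insert_self c S))
  have := Set.ncard_union_eq hdisj (Set.toFinite _) (Set.toFinite _)
  rw [← hU] at this
  exact this

/-- independence of events depending on disjoint variable sets -/
lemma indep (s : Finset V) (A B : Set Φ.Assign)
    (hA : ∀ x y : Φ.Assign, (∀ v ∈ s, x v = y v) → x ∈ A → y ∈ A)
    (hB : ∀ x y : Φ.Assign, (∀ v, v ∉ s → x v = y v) → x ∈ B → y ∈ B) :
    A.ncard * B.ncard = (A ∩ B).ncard * Fintype.card Φ.Assign := by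
  classical
  set e := Equiv.piEquivPiSubtypeProd (fun v => v ∈ s) Φ.Q with he
  set A₁ := Prod.fst '' (e '' A) with hA₁
  set B₂ := Prod.snd '' (e '' B) with hB₂
  have himA : e '' A = A₁ ×ˢ (Set.univ) := by
    apply Set.Subset.antisymm
    · intro z hz
      exact ⟨⟨z, hz, rfl⟩, trivial⟩
    · rintro ⟨y, z⟩ ⟨⟨w, ⟨x, hx, hex⟩, hw⟩, -⟩
      have hx' : e.symm (y, z) ∈ A := by
        apply hA x
        · intro v hv
          have h2 : e.symm (y, z) v = y ⟨v, hv⟩ := by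
            simp [he, Equiv.piEquivPiSubtypeProd, hv]
          have h4 : (e x).1 ⟨v, hv⟩ = y ⟨v, hv⟩ := by
            rw [hex]; exact congrFun hw ⟨v, hv⟩
          rw [h2, ← h4]
          rfl
        · exact hx
      have : e (e.symm (y, z)) = (y, z) := e.apply_symm_apply _
      exact this ▸ Set.mem_image_of_mem e hx'
  have himB : e '' B = (Set.univ) ×ˢ B₂ := by
    apply Set.Subset.antisymm
    · intro z hz
      exact ⟨trivial, ⟨z, hz, rfl⟩⟩
    · rintro ⟨y, z⟩ ⟨-, ⟨w, ⟨x, hx, hex⟩, hw⟩⟩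
      have hx' : e.symm (y, z) ∈ B := by
        apply hB x
        · intro v hv
          have h2 : e.symm (y, z) v = z ⟨v, hv⟩ := by
            simp [he, Equiv.piEquivPiSubtypeProd, hv]
          have h4 : (e x).2 ⟨v, hv⟩ = z ⟨v, hv⟩ := by
            rw [hex]; exact congrFun hw ⟨v, hv⟩
          rw [h2, ← h4]
          rfl
        · exact hx
      have : e (e.symm (y, z)) = (y, z) := e.apply_symm_apply _
      exact this ▸ Set.mem_image_of_mem e hx'
  have himAB : e '' (A ∩ B) = A₁ ×ˢ B₂ := by
    rw [Set.image_inter e.injective, himA, himB, Set.prod_inter_prod, Set.inter_univ,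
      Set.univ_inter]
  have ncard_prod : ∀ (X : Set ((v : {v // v ∈ s}) → Φ.Q v)) (Y : Set ((v : {v // ¬ v ∈ s}) → Φ.Q v)),
      (X ×ˢ Y).ncard = X.ncard * Y.ncard := by
    intro X Y
    rw [← Nat.card_coe_set_eq, ← Nat.card_coe_set_eq, ← Nat.card_coe_set_eq,
      Nat.card_congr (Equiv.Set.prod X Y), Nat.card_prod]
  have hcA : A.ncard = A₁.ncard * Fintype.card ((v : {v // ¬ v ∈ s}) → Φ.Q v) := by
    rw [← Set.ncard_image_of_injective A e.injective, himA, ncard_prod, Set.ncard_univ,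
      Nat.card_eq_fintype_card]
  have hcB : B.ncard = Fintype.card ((v : {v // v ∈ s}) → Φ.Q v) * B₂.ncard := by
    rw [← Set.ncard_image_of_injective B e.injective, himB, ncard_prod, Set.ncard_univ,
      Nat.card_eq_fintype_card]
  have hcAB : (A ∩ B).ncard = A₁.ncard * B₂.ncard := by
    rw [← Set.ncard_image_of_injective (A ∩ B) e.injective, himAB, ncard_prod]
  have hcard : Fintype.card Φ.Assign =
      Fintype.card ((v : {v // v ∈ s}) → Φ.Q v) * Fintype.card ((v : {v // ¬ v ∈ s}) → Φ.Q v) := by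
    rw [← Fintype.card_prod]
    exact Fintype.card_congr e
  rw [hcA, hcB, hcAB, hcard]
  ring

section Induction
variable (x p : ℝ) (hx0 : 0 ≤ x) (hx1 : x ≤ 1)
  (hpc : ∀ c, ((Φ.viol c).ncard : ℝ) ≤ p * Fintype.card Φ.Assign)
  (hpx : p ≤ x * (1 - x) ^ Φ.degree)

include hx0 hx1 hpc hpx

/-- derived bound B, assuming A below a cutoff -/
lemma Bgen (n : ℕ)
    (hA : ∀ S' : Finset Φ.C, S'.card < n → ∀ c ∉ S',
      ((Φ.viol c ∩ Φ.satAll S').ncard : ℝ) ≤ x * (Φ.satAll S').ncard) :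
    ∀ (k : ℕ) (S R : Finset Φ.C), (S \ R).card = k → S.card ≤ n → R ⊆ S →
      (1 - x) ^ k * ((Φ.satAll R).ncard : ℝ) ≤ (Φ.satAll S).ncard := by
  intro k
  induction k with
  | zero =>
    intro S R hcard _ hRS
    have : S = R := (Finset.Subset.antisymm
      (Finset.sdiff_eq_empty_iff_subset.mp (Finset.card_eq_zero.mp hcard)) hRS)
    rw [this, pow_zero, one_mul]
  | succ k ih =>
    intro S R hcard hSn hRS
    have hne : (S \ R).Nonempty := Finset.card_pos.mp (by omega)
    obtain ⟨c, hc⟩ := hne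
    have hcS : c ∈ S := (Finset.mem_sdiff.mp hc).1
    have hcR : c ∉ R := (Finset.mem_sdiff.mp hc).2
    set S' := S.erase c with hS'
    have hRS' : R ⊆ S' := fun r hr =>
      Finset.mem_erase.mpr ⟨fun h => hcR (h ▸ hr), hRS hr⟩
    have hcS' : c ∉ S' := Finset.notMem_erase c S
    have hcard' : (S' \ R).card = k := by
      rw [hS', Finset.erase_sdiff_comm]
      rw [Finset.card_erase_of_mem hc]
      omega
    have hS'card : S'.card < n := by
      rw [hS', Finset.card_erase_of_mem hcS]
      have : 1 ≤ S.card := Finset.card_pos.mpr ⟨c, hcS⟩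
      omega
    have hIH := ih S' R hcard' hS'card.le hRS'
    have hsplit := satAll_split (Φ := Φ) S' c hcS'
    have hins : insert c S' = S := Finset.insert_erase hcS
    rw [hins] at hsplit
    have hAc := hA S' hS'card c hcS'
    have hstep : (1 - x) * ((Φ.satAll S').ncard : ℝ) ≤ (Φ.satAll S).ncard := by
      have : ((Φ.satAll S').ncard : ℝ) =
          (Φ.satAll S).ncard + (Φ.viol c ∩ Φ.satAll S').ncard := by
        exact_mod_cast congrArg Nat.cast hsplit
      nlinarith [Nat.cast_nonneg (α := ℝ) (Φ.satAll S').ncard]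
    calc (1 - x) ^ (k + 1) * ((Φ.satAll R).ncard : ℝ)
        = (1 - x) * ((1 - x) ^ k * (Φ.satAll R).ncard) := by ring
      _ ≤ (1 - x) * (Φ.satAll S').ncard := by
          apply mul_le_mul_of_nonneg_left hIH (by linarith)
      _ ≤ (Φ.satAll S).ncard := hstep

lemma keyA : ∀ (n : ℕ) (S : Finset Φ.C), S.card ≤ n → ∀ c ∉ S,
    ((Φ.viol c ∩ Φ.satAll S).ncard : ℝ) ≤ x * (Φ.satAll S).ncard := by
  intro n
  induction n using Nat.strong_induction_on with
  | _ n ihn =>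
    intro S hSn c hcS
    have hA' : ∀ S' : Finset Φ.C, S'.card < S.card → ∀ c' ∉ S',
        ((Φ.viol c' ∩ Φ.satAll S').ncard : ℝ) ≤ x * (Φ.satAll S').ncard := by
      intro S' hlt c' hc'
      exact ihn S'.card (lt_of_lt_of_le hlt hSn) S' le_rfl c' hc'
    set N := S.filter (fun c' => (Φ.vbl c ∩ Φ.vbl c').Nonempty) with hN
    set R := S \ N with hR
    have hRS : R ⊆ S := Finset.sdiff_subset
    have hNS : N ⊆ S := Finset.filter_subset _ _
    have hSR : S \ R = N := by
      rw [hR, Finset.sdiff_sdiff_self_left, Finset.inter_eq_right.mpr hNS]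
    have hNd : N.card ≤ Φ.degree := by
      have hsub : N ⊆ Finset.univ.filter
          (fun c' : Φ.C => c' ≠ c ∧ ((Φ.vbl c) ∩ (Φ.vbl c')).Nonempty) := by
        intro c' hc'
        rw [hN, Finset.mem_filter] at hc'
        refine Finset.mem_filter.mpr ⟨Finset.mem_univ _, fun h => hcS (h ▸ hc'.1), hc'.2⟩
      calc N.card ≤ _ := Finset.card_le_card hsub
        _ ≤ Φ.degree := Finset.le_sup (f := fun c : Φ.C =>
          (Finset.univ.filter fun c' : Φ.C =>
            c' ≠ c ∧ ((Φ.vbl c) ∩ (Φ.vbl c')).Nonempty).card) (Finset.mem_univ c)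
    have hindep := indep (Φ.vbl c) (Φ.viol c) (Φ.satAll R)
      (by
        intro a b hab ha hb
        exact ha (Φ.sat_local c b a (fun v hv => (hab v hv).symm) hb))
      (by
        intro a b hab ha c' hc'
        apply Φ.sat_local c' a b _ (ha c' hc')
        intro v hv
        apply hab
        intro hvc
        have : c' ∈ N := Finset.mem_filter.mpr ⟨hRS hc', ⟨v, Finset.mem_inter.mpr ⟨hvc, hv⟩⟩⟩
        exact (Finset.mem_sdiff.mp hc').2 this)
    have hviolR : ((Φ.viol c ∩ Φ.satAll R).ncard : ℝ) ≤ p * (Φ.satAll R).ncard := by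
      have htot : (0 : ℝ) < Fintype.card Φ.Assign := by exact_mod_cast total_pos (Φ := Φ)
      have h1 : ((Φ.viol c ∩ Φ.satAll R).ncard : ℝ) * Fintype.card Φ.Assign =
          (Φ.viol c).ncard * (Φ.satAll R).ncard := by exact_mod_cast congrArg Nat.cast hindep.symm
      have h2 : ((Φ.viol c).ncard : ℝ) * (Φ.satAll R).ncard ≤
          (p * Fintype.card Φ.Assign) * (Φ.satAll R).ncard := by
        apply mul_le_mul_of_nonneg_right (hpc c) (by positivity)
      rw [← mul_le_mul_iff_left₀ htot]
      calc ((Φ.viol c ∩ Φ.satAll R).ncard : ℝ) * Fintype.card Φ.Assign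
          = ((Φ.viol c).ncard : ℝ) * (Φ.satAll R).ncard := h1
        _ ≤ (p * Fintype.card Φ.Assign) * (Φ.satAll R).ncard := h2
        _ = p * (Φ.satAll R).ncard * Fintype.card Φ.Assign := by ring
    have hmono : ((Φ.viol c ∩ Φ.satAll S).ncard : ℝ) ≤ (Φ.viol c ∩ Φ.satAll R).ncard := by
      exact_mod_cast Set.ncard_le_ncard
        (Set.inter_subset_inter_right _ (satAll_anti hRS)) (Set.toFinite _)
    have hB := Bgen x p hx0 hx1 hpc hpx S.card hA' N.card S R (hSR ▸ rfl) le_rfl hRS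
    have hpowle : (1 - x) ^ Φ.degree ≤ (1 - x) ^ N.card :=
      pow_le_pow_of_le_one (by linarith) (by linarith) hNd
    have hRnn : (0 : ℝ) ≤ (Φ.satAll R).ncard := by positivity
    calc ((Φ.viol c ∩ Φ.satAll S).ncard : ℝ)
        ≤ (Φ.viol c ∩ Φ.satAll R).ncard := hmono
      _ ≤ p * (Φ.satAll R).ncard := hviolR
      _ ≤ (x * (1 - x) ^ Φ.degree) * (Φ.satAll R).ncard :=
          mul_le_mul_of_nonneg_right hpx hRnn
      _ ≤ (x * (1 - x) ^ N.card) * (Φ.satAll R).ncard := by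
          apply mul_le_mul_of_nonneg_right _ hRnn
          exact mul_le_mul_of_nonneg_left hpowle hx0
      _ = x * ((1 - x) ^ N.card * (Φ.satAll R).ncard) := by ring
      _ ≤ x * (Φ.satAll S).ncard := mul_le_mul_of_nonneg_left hB hx0

lemma keyB (S R : Finset Φ.C) (hRS : R ⊆ S) :
    (1 - x) ^ ((S \ R).card) * ((Φ.satAll R).ncard : ℝ) ≤ (Φ.satAll S).ncard := by
  apply Bgen x p hx0 hx1 hpc hpx S.card _ _ S R rfl le_rfl hRS
  intro S' hlt c hc
  exact keyA x p hx0 hx1 hpc hpx S'.card S' le_rfl c hc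

end Induction
end CSP

open CSP in
/-- **Local uniformity.**
If `e·p·(Δ+1) < 1` and every constraint has violation probability at most `p`, then `Φ`
has a satisfying assignment and for every variable `v` and value `a ∈ Q_v`,
`1/q_v − ((1 − e·p)^{−(Δ+1)} − 1) ≤ Pr_{X∼μ}[X(v) = a] ≤ 1/q_v + ((1 − e·p)^{−(Δ+1)} − 1)`. -/
theorem statement2 {V : Type} [Fintype V] [DecidableEq V] (Φ : CSP V)
    (p : ℝ) (hp : p ∈ Set.Ioo (0 : ℝ) 1)
    (hlll : Real.exp 1 * p * ((Φ.degree : ℝ) + 1) < 1)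
    (hpc : ∀ c, Φ.prob (Φ.viol c) ≤ p) :
    Φ.Sat.Nonempty ∧
    ∀ (v : V) (a : Φ.Q v),
      (1 / (Fintype.card (Φ.Q v) : ℝ) - (((1 - Real.exp 1 * p) ^ (Φ.degree + 1))⁻¹ - 1)
          ≤ Φ.muProb {x : Φ.Assign | x v = a}) ∧
      Φ.muProb {x : Φ.Assign | x v = a}
          ≤ 1 / (Fintype.card (Φ.Q v) : ℝ) + (((1 - Real.exp 1 * p) ^ (Φ.degree + 1))⁻¹ - 1) := by
  classical
  set x := Real.exp 1 * p with hxdef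
  have hx0 : 0 < x := mul_pos (Real.exp_pos 1) hp.1
  have hD0 : (0:ℝ) ≤ (Φ.degree : ℝ) := Nat.cast_nonneg _
  have hxlt : x < 1 := by nlinarith [hlll]
  have hpx : p ≤ x * (1 - x) ^ Φ.degree := lll_numeric hp.1 hlll.le
  have htot : (0:ℝ) < Fintype.card Φ.Assign := by
    exact_mod_cast total_pos (Φ := Φ)
  have hpc' : ∀ c, ((Φ.viol c).ncard : ℝ) ≤ p * Fintype.card Φ.Assign := by
    intro c
    have h1 := hpc c
    rw [CSP.prob] at h1
    have := (div_le_iff₀ htot).mp h1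
    linarith
  have hB := fun S R hRS => keyB (Φ := Φ) x p hx0.le hxlt.le hpc' hpx S R hRS
  have hSatAll : Φ.satAll Finset.univ = Φ.Sat := by
    ext y; simp [satAll, Sat]
  have hsatAllEmpty : ((Φ.satAll (∅ : Finset Φ.C)).ncard : ℝ) = Fintype.card Φ.Assign := by
    have h2 : Φ.satAll (∅ : Finset Φ.C) = Set.univ := by ext y; simp [satAll]
    rw [h2, Set.ncard_univ, Nat.card_eq_fintype_card]
  have hSatpos : (0:ℝ) < (Φ.Sat.ncard : ℝ) := by
    have h := hB Finset.univ ∅ (Finset.empty_subset _)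
    rw [hsatAllEmpty, hSatAll] at h
    have hpow : (0:ℝ) < (1 - x) ^ ((Finset.univ \ (∅ : Finset Φ.C)).card) :=
      pow_pos (by linarith) _
    nlinarith
  have hSatne : Φ.Sat.Nonempty := by
    rw [← Set.ncard_pos (Set.toFinite _)]
    exact_mod_cast hSatpos
  refine ⟨hSatne, ?_⟩
  intro v a
  set y := (1 - x) ^ (Φ.degree + 1) with hydef
  have hy : (0:ℝ) < y := by rw [hydef]; exact pow_pos (by linarith) _
  have hyle : y ≤ 1 := pow_le_one₀ (by linarith) (by linarith)
  have ht1 : 1 ≤ y⁻¹ := by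
    rw [le_inv_comm₀ one_pos hy]
    simpa using hyle
  set qv := (Fintype.card (Φ.Q v) : ℝ) with hqv
  have hqv2 : (2:ℝ) ≤ qv := by rw [hqv]; exact_mod_cast Φ.card_two v
  have hqvpos : (0:ℝ) < qv := by linarith
  have hdiv : (1 / qv) * qv = 1 := by field_simp
  set Γ := Finset.univ.filter (fun c : Φ.C => v ∈ Φ.vbl c) with hΓ
  set Rv := Finset.univ \ Γ with hRv
  have hΓd : Γ.card ≤ Φ.degree + 1 := by
    rcases Finset.eq_empty_or_nonempty Γ with h | ⟨c0, hc0⟩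
    · rw [h]; simp
    · have hvc0 : v ∈ Φ.vbl c0 := (Finset.mem_filter.mp hc0).2
      have hsub : Γ ⊆ insert c0 (Finset.univ.filter
          (fun c' : Φ.C => c' ≠ c0 ∧ ((Φ.vbl c0) ∩ (Φ.vbl c')).Nonempty)) := by
        intro c' hc'
        by_cases h : c' = c0
        · exact h ▸ Finset.mem_insert_self _ _
        · apply Finset.mem_insert_of_mem
          refine Finset.mem_filter.mpr ⟨Finset.mem_univ _, h, ⟨v, ?_⟩⟩
          exact Finset.mem_inter.mpr ⟨hvc0, (Finset.mem_filter.mp hc').2⟩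
      have h1 := Finset.card_le_card hsub
      have h2 := Finset.card_insert_le c0 (Finset.univ.filter
        (fun c' : Φ.C => c' ≠ c0 ∧ ((Φ.vbl c0) ∩ (Φ.vbl c')).Nonempty))
      have h3 : (Finset.univ.filter
          (fun c' : Φ.C => c' ≠ c0 ∧ ((Φ.vbl c0) ∩ (Φ.vbl c')).Nonempty)).card
          ≤ Φ.degree := Finset.le_sup (f := fun c : Φ.C =>
          (Finset.univ.filter fun c' : Φ.C =>
            c' ≠ c ∧ ((Φ.vbl c) ∩ (Φ.vbl c')).Nonempty).card) (Finset.mem_univ c0)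
      omega
  -- fiberwise upper bound
  have hub : ∀ b : Φ.Q v, (({z : Φ.Assign | z v = b} ∩ Φ.Sat).ncard : ℝ) * qv
      ≤ y⁻¹ * (Φ.Sat.ncard : ℝ) := by
    intro b
    have hmono : (({z : Φ.Assign | z v = b} ∩ Φ.Sat).ncard : ℝ)
        ≤ (({z : Φ.Assign | z v = b} ∩ Φ.satAll Rv).ncard : ℝ) := by
      have : Φ.Sat ⊆ Φ.satAll Rv := by
        rw [← hSatAll]; exact satAll_anti (Finset.subset_univ _)
      exact_mod_cast Set.ncard_le_ncard
        (Set.inter_subset_inter_right _ this) (Set.toFinite _)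
    have hind := indep ({v} : Finset V) ({z : Φ.Assign | z v = b}) (Φ.satAll Rv)
      (by
        intro z w hzw hz
        have := hzw v (Finset.mem_singleton_self v)
        simp only [Set.mem_setOf_eq] at hz ⊢
        rw [← this, hz])
      (by
        intro z w hzw hz c' hc'
        apply Φ.sat_local c' z w _ (hz c' hc')
        intro w' hw'
        apply hzw
        intro hw'v
        rw [Finset.mem_singleton] at hw'v
        subst hw'v
        have hnΓ : c' ∉ Γ := (Finset.mem_sdiff.mp hc').2
        exact hnΓ (Finset.mem_filter.mpr ⟨Finset.mem_univ _, hw'⟩))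
    have hfc : (({z : Φ.Assign | z v = b}).ncard : ℝ) * qv = Fintype.card Φ.Assign := by
      rw [hqv]
      exact_mod_cast congrArg Nat.cast (fiber_card v b)
    have hN2 : (({z : Φ.Assign | z v = b} ∩ Φ.satAll Rv).ncard : ℝ) * qv
        = ((Φ.satAll Rv).ncard : ℝ) := by
      have hindR : (({z : Φ.Assign | z v = b}).ncard : ℝ) * ((Φ.satAll Rv).ncard : ℝ)
          = (({z : Φ.Assign | z v = b} ∩ Φ.satAll Rv).ncard : ℝ) * Fintype.card Φ.Assign := by
        exact_mod_cast congrArg Nat.cast hind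
      apply mul_right_cancel₀ htot.ne'
      calc (({z : Φ.Assign | z v = b} ∩ Φ.satAll Rv).ncard : ℝ) * qv * Fintype.card Φ.Assign
            = (({z : Φ.Assign | z v = b} ∩ Φ.satAll Rv).ncard : ℝ) * Fintype.card Φ.Assign * qv := by
              ring
          _ = (({z : Φ.Assign | z v = b}).ncard : ℝ) * ((Φ.satAll Rv).ncard : ℝ) * qv := by
              rw [hindR]
          _ = ((({z : Φ.Assign | z v = b}).ncard : ℝ) * qv) * ((Φ.satAll Rv).ncard : ℝ) := by
              ring
          _ = ((Φ.satAll Rv).ncard : ℝ) * Fintype.card Φ.Assign := by rw [hfc]; ring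
    have hBv := hB Finset.univ Rv Finset.sdiff_subset
    rw [hSatAll] at hBv
    have hΓeq : Finset.univ \ Rv = Γ := by
      rw [hRv, Finset.sdiff_sdiff_self_left,
        Finset.inter_eq_right.mpr (Finset.subset_univ Γ)]
    rw [hΓeq] at hBv
    have hpowΓ : y ≤ (1 - x) ^ Γ.card := by
      rw [hydef]
      exact pow_le_pow_of_le_one (by linarith) (by linarith) hΓd
    have hRvnn : (0:ℝ) ≤ ((Φ.satAll Rv).ncard : ℝ) := Nat.cast_nonneg _
    have hyRv : y * ((Φ.satAll Rv).ncard : ℝ) ≤ (Φ.Sat.ncard : ℝ) :=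
      le_trans (mul_le_mul_of_nonneg_right hpowΓ hRvnn) hBv
    have hRvle : ((Φ.satAll Rv).ncard : ℝ) ≤ y⁻¹ * (Φ.Sat.ncard : ℝ) := by
      rw [← mul_le_mul_iff_right₀ hy, ← mul_assoc, mul_inv_cancel₀ hy.ne', one_mul]
      exact hyRv
    calc (({z : Φ.Assign | z v = b} ∩ Φ.Sat).ncard : ℝ) * qv
        ≤ (({z : Φ.Assign | z v = b} ∩ Φ.satAll Rv).ncard : ℝ) * qv :=
          mul_le_mul_of_nonneg_right hmono hqvpos.le
      _ = ((Φ.satAll Rv).ncard : ℝ) := hN2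
      _ ≤ y⁻¹ * (Φ.Sat.ncard : ℝ) := hRvle
  -- partition identity
  have hpart : (Φ.Sat.ncard : ℝ)
      = ∑ b : Φ.Q v, (({z : Φ.Assign | z v = b} ∩ Φ.Sat).ncard : ℝ) := by
    exact_mod_cast congrArg Nat.cast (fiber_partition v Φ.Sat)
  have hsplit : (({z : Φ.Assign | z v = a} ∩ Φ.Sat).ncard : ℝ)
      + ∑ b ∈ Finset.univ.erase a, (({z : Φ.Assign | z v = b} ∩ Φ.Sat).ncard : ℝ)
      = ∑ b : Φ.Q v, (({z : Φ.Assign | z v = b} ∩ Φ.Sat).ncard : ℝ) :=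
    Finset.add_sum_erase Finset.univ
      (fun b => (({z : Φ.Assign | z v = b} ∩ Φ.Sat).ncard : ℝ)) (Finset.mem_univ a)
  have hcarderase : ((Finset.univ.erase a).card : ℝ) = qv - 1 := by
    rw [Finset.card_erase_of_mem (Finset.mem_univ a), Finset.card_univ, hqv]
    have : 1 ≤ Fintype.card (Φ.Q v) := by have := Φ.card_two v; omega
    push_cast [Nat.cast_sub this]
    ring
  have hsumbound : (∑ b ∈ Finset.univ.erase a,
      (({z : Φ.Assign | z v = b} ∩ Φ.Sat).ncard : ℝ)) * qv
      ≤ (qv - 1) * (y⁻¹ * (Φ.Sat.ncard : ℝ)) := by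
    rw [Finset.sum_mul]
    calc ∑ b ∈ Finset.univ.erase a, (({z : Φ.Assign | z v = b} ∩ Φ.Sat).ncard : ℝ) * qv
        ≤ (Finset.univ.erase a).card • (y⁻¹ * (Φ.Sat.ncard : ℝ)) :=
          Finset.sum_le_card_nsmul _ _ _ (fun b _ => hub b)
      _ = ((Finset.univ.erase a).card : ℝ) * (y⁻¹ * (Φ.Sat.ncard : ℝ)) := by
          rw [nsmul_eq_mul]
      _ = (qv - 1) * (y⁻¹ * (Φ.Sat.ncard : ℝ)) := by rw [hcarderase]
  have hNann : (0:ℝ) ≤ (({z : Φ.Assign | z v = a} ∩ Φ.Sat).ncard : ℝ) := Nat.cast_nonneg _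
  have hmu : Φ.muProb {z : Φ.Assign | z v = a}
      = (({z : Φ.Assign | z v = a} ∩ Φ.Sat).ncard : ℝ) / (Φ.Sat.ncard : ℝ) := rfl
  constructor
  · -- lower bound
    rw [hmu, le_div_iff₀ hSatpos]
    -- (1/qv - (y⁻¹ - 1)) * Sc ≤ Na
    have hkey : ((Φ.Sat.ncard : ℝ)
        - (({z : Φ.Assign | z v = a} ∩ Φ.Sat).ncard : ℝ)) * qv
        ≤ (qv - 1) * (y⁻¹ * (Φ.Sat.ncard : ℝ)) := by
      have : (Φ.Sat.ncard : ℝ) - (({z : Φ.Assign | z v = a} ∩ Φ.Sat).ncard : ℝ)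
          = ∑ b ∈ Finset.univ.erase a, (({z : Φ.Assign | z v = b} ∩ Φ.Sat).ncard : ℝ) := by
        rw [hpart, ← hsplit]; ring
      rw [this]
      exact hsumbound
    exact arith_lower hqv2 ht1 hSatpos.le hkey
  · -- upper bound
    rw [hmu, div_le_iff₀ hSatpos]
    exact arith_upper hqv2 ht1 hSatpos.le (by linarith [hub a])
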